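/- Let d ≥ 1, let H be a d×d real symmetric matrix with 0 ⪯ H ⪯ βI for some β > 0, let δ ∈ (0, 1/2], and let η, η′ ∈ ℝ with |η′ − η| ≤ 1/(8β). Then for every λ ∈ ℂ with λ ≠ 0 such that λ + δ − 1 is an eigenvalue of the d×d complex matrix ((λ−1)/λ²)(η′ − η)H, it holds that |λ| < 1 − δ/2. -/

import Mathlib

open Matrix

noncomputable section

open scoped MatrixOrder in
open scoped ComplexOrder in
lemma psd_map_complex {d : ℕ} {M : Matrix (Fin d) (Fin d) ℝ} (hM : M.PosSemidef) :
    (M.map (Complex.ofReal ·)).PosSemidef := by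
  obtain ⟨B, hB⟩ := CStarAlgebra.nonneg_iff_eq_star_mul_self.mp hM.nonneg
  have : M.map (Complex.ofReal ·) = (B.map (Complex.ofReal ·))ᴴ * (B.map (Complex.ofReal ·)) := by
    subst hB
    ext i j
    simp [Matrix.mul_apply, Matrix.conjTranspose_apply, Matrix.map_apply, Matrix.star_eq_conjTranspose]
  rw [this]
  exact Matrix.posSemidef_conjTranspose_mul_self _

/-- Gradient-descent lemma (Section 3.1.1): if `0 ⪯ H ⪯ βI`, `δ ∈ (0, 1/2]` and
`|η′ − η| ≤ 1/(8β)`, then any nonzero `λ ∈ ℂ` such that `λ + δ − 1` is an eigenvalue of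
`((λ−1)/λ²)(η′ − η)H` satisfies `|λ| < 1 − δ/2`. -/
theorem stmt5 (d : ℕ) (hd : 1 ≤ d) (H : Matrix (Fin d) (Fin d) ℝ) (β : ℝ) (hβ : 0 < β)
    (hH : H.PosSemidef) (hHβ : (β • (1 : Matrix (Fin d) (Fin d) ℝ) - H).PosSemidef)
    (δ : ℝ) (hδ : δ ∈ Set.Ioc (0 : ℝ) (1 / 2))
    (η η' : ℝ) (hη : |η' - η| ≤ 1 / (8 * β))
    (lam : ℂ) (hlam0 : lam ≠ 0)
    (hlam : lam + (δ : ℂ) - 1 ∈ spectrum ℂ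
      ((((lam - 1) / lam ^ 2) * ((η' : ℂ) - (η : ℂ))) • H.map (Complex.ofReal ·))) :
    ‖lam‖ < 1 - δ / 2 := by
  open scoped ComplexOrder in
  obtain ⟨hδ0, hδ2⟩ := hδ
  set A : Matrix (Fin d) (Fin d) ℂ := H.map (Complex.ofReal ·) with hAdef
  set c : ℂ := ((lam - 1) / lam ^ 2) * ((η' : ℂ) - (η : ℂ)) with hcdef
  set μ : ℂ := lam + (δ : ℂ) - 1 with hμdef
  -- extract an eigenvector
  rw [spectrum.mem_iff, Matrix.isUnit_iff_isUnit_det, isUnit_iff_ne_zero, not_not] at hlam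
  obtain ⟨v, hv0, hv⟩ := (Matrix.exists_mulVec_eq_zero_iff).mpr hlam
  have hvec : c • (A *ᵥ v) = μ • v := by
    have := hv
    rw [Algebra.algebraMap_eq_smul_one, Matrix.sub_mulVec, Matrix.smul_mulVec,
      Matrix.smul_mulVec, Matrix.one_mulVec, sub_eq_zero] at this
    exact this.symm
  -- quadratic forms
  set q : ℂ := dotProduct (star v) (A *ᵥ v) with hqdef
  set n : ℂ := dotProduct (star v) v with hndef
  have hA : A.PosSemidef := psd_map_complex hH
  have hA2 : ((β : ℂ) • (1 : Matrix (Fin d) (Fin d) ℂ) - A).PosSemidef := by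
    have : (β : ℂ) • (1 : Matrix (Fin d) (Fin d) ℂ) - A
        = (β • (1 : Matrix (Fin d) (Fin d) ℝ) - H).map (Complex.ofReal ·) := by
      ext i j
      by_cases h : i = j <;> simp [hAdef, Matrix.map_apply, Matrix.one_apply, h, Matrix.smul_apply]
    rw [this]
    exact psd_map_complex hHβ
  have hq0 : 0 ≤ q := hA.dotProduct_mulVec_nonneg v
  have hn0 : 0 < n := by
    rw [hndef]
    exact Matrix.dotProduct_star_self_pos_iff.mpr hv0
  have hqβ : 0 ≤ (β : ℂ) * n - q := by
    have := hA2.dotProduct_mulVec_nonneg v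
    rwa [Matrix.sub_mulVec, Matrix.smul_mulVec, Matrix.one_mulVec, dotProduct_sub,
      dotProduct_smul, smul_eq_mul] at this
  -- reality
  have hqim : q.im = 0 := ((Complex.nonneg_iff).mp hq0).2.symm
  have hqre : 0 ≤ q.re := ((Complex.nonneg_iff).mp hq0).1
  have hnim : n.im = 0 := ((Complex.pos_iff).mp hn0).2.symm
  have hnre : 0 < n.re := ((Complex.pos_iff).mp hn0).1
  -- the scalar equation c * q = μ * n
  have heq : c * q = μ * n := by
    have := congrArg (fun w => dotProduct (star v) w) hvec
    simpa [dotProduct_smul, smul_eq_mul, hqdef, hndef] using this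
  -- μ = c * t with t = q.re / n.re ∈ [0, β]
  set t : ℝ := q.re / n.re with htdef
  have hq : q = (q.re : ℂ) := Complex.ext rfl hqim
  have hn : n = (n.re : ℂ) := Complex.ext rfl hnim
  have hμeq : μ = c * (t : ℂ) := by
    have hne : (n.re : ℂ) ≠ 0 := by exact_mod_cast hnre.ne'
    have heq' : μ * (n.re : ℂ) = c * (q.re : ℂ) := by
      rw [← hq, ← hn]; linear_combination -heq
    rw [htdef]
    push_cast
    rw [← mul_div_assoc, eq_div_iff hne]
    exact heq'
  have ht0 : 0 ≤ t := div_nonneg hqre hnre.le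
  have htβ : t ≤ β := by
    rw [htdef, div_le_iff₀ hnre]
    have : 0 ≤ ((β : ℂ) * n - q).re := ((Complex.nonneg_iff).mp hqβ).1
    rw [hn] at this
    simp only [Complex.sub_re, Complex.mul_re, Complex.ofReal_re, Complex.ofReal_im] at this
    linarith
  -- abs bound
  set r : ℝ := ‖lam‖ with hrdef
  set L : ℝ := ‖lam - 1‖ with hLdef
  set e : ℝ := |η' - η| * t with hedef
  have he18 : e ≤ 1 / 8 := by
    calc e ≤ (1 / (8 * β)) * β := by
            apply mul_le_mul hη htβ ht0 (le_of_lt (by positivity))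
      _ = 1 / 8 := by field_simp
  have he0 : 0 ≤ e := mul_nonneg (abs_nonneg _) ht0
  have habs : ‖μ‖ * r ^ 2 = L * e := by
    have hr0 : r ≠ 0 := by simpa [hrdef] using (norm_ne_zero_iff.mpr hlam0)
    have : ‖μ‖ = L / r ^ 2 * e := by
      rw [hμeq, norm_mul, hcdef, norm_mul, norm_div, norm_pow]
      have h1 : ‖(η' : ℂ) - (η : ℂ)‖ = |η' - η| := by
        rw [← Complex.ofReal_sub, Complex.norm_real, Real.norm_eq_abs]
      have h2 : ‖(t : ℂ)‖ = t := by rw [Complex.norm_real, Real.norm_eq_abs, abs_of_nonneg ht0]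
      rw [h1, h2, hedef]
      ring
    rw [this]
    field_simp
  -- contradiction
  by_contra hcon
  push_neg at hcon
  have hr34 : (3 : ℝ) / 4 ≤ r := by linarith
  have hμlb : r - (1 - δ) ≤ ‖μ‖ := by
    have h1 : ‖(1 : ℂ) - (δ : ℂ)‖ = 1 - δ := by
      rw [show (1 : ℂ) - (δ : ℂ) = ((1 - δ : ℝ) : ℂ) by push_cast; ring, Complex.norm_real, Real.norm_eq_abs]
      rw [abs_of_nonneg]; linarith
    have h2 : μ = lam - ((1 : ℂ) - (δ : ℂ)) := by rw [hμdef]; ring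
    calc r - (1 - δ) = ‖lam‖ - ‖(1 : ℂ) - (δ : ℂ)‖ := by rw [h1]
      _ ≤ ‖lam - ((1 : ℂ) - (δ : ℂ))‖ := by
          exact norm_sub_norm_le lam _
      _ = ‖μ‖ := by rw [← h2]
  have hLub : L ≤ ‖μ‖ + δ := by
    have h2 : lam - 1 = μ + (δ : ℂ) * (-1) := by rw [hμdef]; ring
    calc L = ‖μ + (δ : ℂ) * (-1)‖ := by rw [hLdef, h2]
      _ ≤ ‖μ‖ + ‖(δ : ℂ) * (-1)‖ := norm_add_le _ _
      _ = ‖μ‖ + δ := by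
          rw [norm_mul, Complex.norm_real, Real.norm_eq_abs, abs_of_nonneg hδ0.le]; simp
  have hL0 : 0 ≤ L := norm_nonneg _
  have hμ2 : δ / 2 ≤ ‖μ‖ := by linarith
  have h1 : L * e ≤ (‖μ‖ + δ) * (1 / 8) :=
    mul_le_mul hLub he18 he0 (by linarith)
  have h2 : ‖μ‖ * (9 / 16) ≤ ‖μ‖ * r ^ 2 :=
    mul_le_mul_of_nonneg_left (by nlinarith) (by linarith)
  linarith
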